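/- arXiv:2101.10271 — 6 statements merged into one kernel-verified Lean document; each statement's English description precedes it below -/
import Mathlib

section
/- Let g ≥ 2, α = 2π/(8g−4), and for each integer k define the Möbius transformation T_k(z) = (−1)^{k+1} (e^{i(1−k)α} z + i·√(cos α)) / ((−i·√(cos α)) z + e^{i(k−1)α}) on the complex plane. Then for all z on the unit circle, T_k(e^{iα} z) = e^{i(4g−3)α} · T_{k−1}(z). -/
open Complex Real

noncomputable def alphaG (g : ℕ) : ℝ := 2 * Real.pi / (8 * (g : ℝ) - 4)

noncomputable def Tgen (g : ℕ) (k : ℤ) (z : ℂ) : ℂ :=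
  (-1 : ℂ) ^ (k + 1) *
    ((Complex.exp (Complex.I * (1 - (k : ℂ)) * (alphaG g : ℂ)) * z
        + Complex.I * (Real.sqrt (Real.cos (alphaG g)) : ℂ)) /
     (-Complex.I * (Real.sqrt (Real.cos (alphaG g)) : ℂ) * z
        + Complex.exp (Complex.I * ((k : ℂ) - 1) * (alphaG g : ℂ))))

theorem Tgen_shift (g : ℕ) (hg : 2 ≤ g) (k : ℤ) (z : ℂ) (hz : ‖z‖ = 1) :
    Tgen g k (Complex.exp (Complex.I * (alphaG g : ℂ)) * z)
      = Complex.exp (Complex.I * ((4 * (g : ℂ) - 3) * (alphaG g : ℂ))) * Tgen g (k - 1) z := by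
  have hα : ((4 * (g : ℝ) - 3) * alphaG g) = Real.pi - alphaG g := by
    have hg' : (2 : ℝ) ≤ (g : ℝ) := by exact_mod_cast hg
    have h0 : (8 * (g : ℝ) - 4) ≠ 0 := by nlinarith
    unfold alphaG
    have hinv : (8 * (g : ℝ) - 4) * (8 * (g : ℝ) - 4)⁻¹ = 1 := mul_inv_cancel₀ h0
    simp only [div_eq_mul_inv]
    linear_combination Real.pi * hinv
  unfold Tgen
  set a : ℂ := ((alphaG g : ℝ) : ℂ) with ha
  set s : ℂ := ((Real.sqrt (Real.cos (alphaG g)) : ℝ) : ℂ) with hs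
  set E : ℂ := Complex.exp (Complex.I * a) with hE
  have hEne : E ≠ 0 := Complex.exp_ne_zero _
  push_cast
  set N : ℂ := Complex.exp (Complex.I * (1 - ((k : ℂ) - 1)) * a) * z + Complex.I * s with hN
  set D : ℂ := -Complex.I * s * z + Complex.exp (Complex.I * ((k : ℂ) - 1 - 1) * a) with hD
  have key1 : Complex.exp (Complex.I * (1 - (k : ℂ)) * a) * (E * z) + Complex.I * s = N := by
    rw [hN, hE, ← mul_assoc, ← Complex.exp_add]
    ring_nf
  have key2 : -Complex.I * s * (E * z) + Complex.exp (Complex.I * ((k : ℂ) - 1) * a) = E * D := by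
    rw [hD, hE, mul_add, ← Complex.exp_add]
    ring_nf
  have h3 : Complex.exp (Complex.I * ((4 * (g : ℂ) - 3) * a)) = -E⁻¹ := by
    have hcast : Complex.I * ((4 * (g : ℂ) - 3) * a)
        = ((Real.pi : ℂ)) * Complex.I + -(Complex.I * a) := by
      have h2 := congrArg (fun x : ℝ => (x : ℂ)) hα
      push_cast at h2
      rw [ha, show Complex.I * ((4 * (g : ℂ) - 3) * ((alphaG g : ℝ) : ℂ))
          = ((4 * (g : ℂ) - 3) * ((alphaG g : ℝ) : ℂ)) * Complex.I by ring, h2]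
      ring
    rw [hcast, Complex.exp_add, Complex.exp_pi_mul_I, hE, ← Complex.exp_neg]
    ring
  rw [key1, key2, h3, div_mul_eq_div_div_swap]
  have hpow : ((-1 : ℂ)) ^ (k + 1) = -((-1 : ℂ)) ^ (k - 1 + 1) := by
    rw [show k + 1 = (k - 1 + 1) + 1 by ring, zpow_add₀ (by norm_num : (-1:ℂ) ≠ 0)]
    ring
  rw [hpow, div_eq_mul_inv]
  ring
end

section
/- Let g ≥ 2, α = 2π/(8g−4), C_k = e^{i(k−2g)α}, and T_k(z) = (−1)^{k+1} (e^{i(1−k)α} z + i√(cos α)) / ((−i√(cos α)) z + e^{i(k−1)α}). Then for all z on the unit circle, T_k(C_k · z) · T_k(C_k / z) = 1 / C_k². -/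
open Complex Real

noncomputable def Cmid (g : ℕ) (k : ℤ) : ℂ :=
  Complex.exp (Complex.I * (((k : ℂ) - 2 * (g : ℂ)) * (alphaG g : ℂ)))

theorem Tgen_central_symmetry (g : ℕ) (hg : 2 ≤ g) (k : ℤ) (z : ℂ) (hz : ‖z‖ = 1) :
    Tgen g k (Cmid g k * z) * Tgen g k (Cmid g k / z) = 1 / (Cmid g k) ^ 2 := by
  have hz0 : z ≠ 0 := by intro h; rw [h] at hz; simp at hz
  have hgR : (0:ℝ) < 8 * (g:ℝ) - 4 := by
    have : (2:ℝ) ≤ g := by exact_mod_cast hg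
    linarith
  have hαpos : 0 < alphaG g := by rw [alphaG]; positivity
  have hαlt : alphaG g < 2 * Real.pi := by
    have h12 : (12:ℝ) ≤ 8 * (g:ℝ) - 4 := by
      have : (2:ℝ) ≤ g := by exact_mod_cast hg
      linarith
    rw [alphaG, div_lt_iff₀ hgR]
    nlinarith [Real.pi_pos]
  have hcos1 : Real.cos (alphaG g) < 1 := by
    rcases lt_or_eq_of_le (Real.cos_le_one (alphaG g)) with h | h
    · exact h
    · exfalso
      have := (Real.cos_eq_one_iff_of_lt_of_lt (by linarith) hαlt).1 h
      linarith
  set c : ℝ := Real.sqrt (Real.cos (alphaG g)) with hcdef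
  have hc0 : 0 ≤ c := Real.sqrt_nonneg _
  have hc1 : c < 1 := by
    have h := (Real.sqrt_lt_sqrt_iff_of_pos (by norm_num : (0:ℝ) < 1)).2 hcos1
    simpa using h
  set a : ℂ := Complex.exp (Complex.I * ((k:ℂ) - 1) * ((alphaG g : ℝ):ℂ)) with hadef
  have ha : a ≠ 0 := Complex.exp_ne_zero _
  have hhalf : ((1:ℝ) - 2*(g:ℝ)) * alphaG g = -(Real.pi/2) := by
    rw [alphaG, mul_div_assoc', div_eq_iff hgR.ne']
    ring
  have hmI : Complex.exp (Complex.I * ((1:ℂ) - 2*(g:ℂ)) * ((alphaG g : ℝ):ℂ)) = -Complex.I := by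
    have h1 : Complex.I * ((1:ℂ) - 2*(g:ℂ)) * ((alphaG g : ℝ):ℂ)
        = ((((1:ℝ) - 2*(g:ℝ)) * alphaG g : ℝ) : ℂ) * Complex.I := by
      push_cast; ring
    rw [h1, hhalf]
    push_cast
    rw [Complex.exp_mul_I]
    simp
  have hC : Complex.exp (Complex.I * (((k : ℂ) - 2 * (g : ℂ)) * ((alphaG g : ℝ):ℂ))) = -Complex.I * a := by
    rw [hadef]
    rw [show Complex.I * (((k : ℂ) - 2 * (g : ℂ)) * ((alphaG g : ℝ):ℂ))
        = Complex.I * ((k:ℂ) - 1) * ((alphaG g : ℝ):ℂ)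
          + Complex.I * ((1:ℂ) - 2*(g:ℂ)) * ((alphaG g : ℝ):ℂ) by ring]
    rw [Complex.exp_add, hmI]
    ring
  have hb : Complex.exp (Complex.I * ((1:ℂ) - (k:ℂ)) * ((alphaG g : ℝ):ℂ)) = a⁻¹ := by
    rw [hadef, ← Complex.exp_neg]
    congr 1
    ring
  have hs : ((-1:ℂ)) ^ (k+1) * ((-1:ℂ)) ^ (k+1) = 1 := by
    rw [← zpow_add₀ (by norm_num : (-1:ℂ) ≠ 0)]
    rw [show k+1+(k+1) = 2*(k+1) by ring, zpow_mul]
    norm_num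
  have habs : ‖(c:ℂ) * z‖ = c := by
    rw [norm_mul, hz, Complex.norm_of_nonneg hc0, mul_one]
  have hcz : (1:ℂ) - (c:ℂ) * z ≠ 0 := by
    intro h
    have h2 : (c:ℂ) * z = 1 := by linear_combination -h
    rw [h2] at habs
    simp at habs
    linarith [habs ▸ hc1]
  have hzc : z - (c:ℂ) ≠ 0 := by
    intro h
    have h2 : z = (c:ℂ) := by linear_combination h
    rw [h2, Complex.norm_of_nonneg hc0] at hz
    linarith [hz ▸ hc1]
  have hd1 : -Complex.I * (c:ℂ) * (-Complex.I * a * z) + a ≠ 0 := by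
    have h : -Complex.I * (c:ℂ) * (-Complex.I * a * z) + a = a * (1 - (c:ℂ)*z) := by
      linear_combination (c:ℂ) * a * z * Complex.I_mul_I
    rw [h]
    exact mul_ne_zero ha hcz
  have hd2 : -Complex.I * (c:ℂ) * (-Complex.I * a / z) + a ≠ 0 := by
    have h : -Complex.I * (c:ℂ) * (-Complex.I * a / z) + a = a * (z - (c:ℂ)) / z := by
      field_simp
      linear_combination (c:ℂ) * Complex.I_mul_I
    rw [h]
    exact div_ne_zero (mul_ne_zero ha hzc) hz0
  simp only [Tgen, Cmid]
  rw [← hcdef, ← hadef, hb, hC]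
  field_simp
  rw [div_eq_iff]
  · rw [one_mul]
    linear_combination (z * (Complex.I*a)^2 * (-(Complex.I*a*z) + Complex.I*(c:ℂ)*a) *
        (-(Complex.I*a) + Complex.I*(c:ℂ)*(a*z)) + Complex.I^4*(z + z*(c:ℂ)*a^4 + z*(c:ℂ)^2 - z^2*(c:ℂ) - z^2*(c:ℂ)^2*a^4 - z^2*a^4 + z^3*(c:ℂ)*a^4 - (c:ℂ))) * hs
      + (a^4 * z * ((Complex.I^2 - 1)*z - Complex.I^2*(c:ℂ)*(z^2+1))
        + ((Complex.I^2 - 1)*((z + z*(c:ℂ)*a^4 + z*(c:ℂ)^2 - z^2*(c:ℂ) - z^2*(c:ℂ)^2*a^4 - z^2*a^4 + z^3*(c:ℂ)*a^4 - (c:ℂ)) + (-z*(c:ℂ)^2 + z^2*(c:ℂ)^2*a^4)) + (z*(c:ℂ)*a^4 - z^2*(c:ℂ) + z^3*(c:ℂ)*a^4 - (c:ℂ)))) * Complex.I_sq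
  · have f1 : Complex.I^2*z*(c:ℂ) + 1 = 1 - (c:ℂ)*z := by
      linear_combination z*(c:ℂ) * Complex.I_sq
    have f2 : Complex.I^2*(c:ℂ) + z = z - (c:ℂ) := by
      linear_combination (c:ℂ) * Complex.I_sq
    rw [f1, f2]
    exact mul_ne_zero hcz hzc
end

section
/- Let g ≥ 2, α = 2π/(8g−4), and T_k(z) = (−1)^{k+1} (e^{i(1−k)α} z + i√(cos α)) / ((−i√(cos α)) z + e^{i(k−1)α}). Then for all z on the unit circle, T_k(1/z) = 1 / T_{4g−k}(z). -/
open Complex Real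

theorem Tgen_oddness (g : ℕ) (hg : 2 ≤ g) (k : ℤ) (z : ℂ) (hz : ‖z‖ = 1) :
    Tgen g k (1 / z) = 1 / Tgen g (4 * (g : ℤ) - k) z := by
  have hz0 : z ≠ 0 := by
    intro h; simp [h] at hz
  have hg2 : (2:ℝ) ≤ (g:ℝ) := by exact_mod_cast hg
  have hden : (8 * (g:ℝ) - 4) ≠ 0 := by nlinarith
  have hπR : (4 * (g:ℝ) - 2) * alphaG g = Real.pi := by
    rw [alphaG, mul_div_assoc', div_eq_iff hden]; ring
  have hπC : (4 * (g:ℂ) - 2) * ((alphaG g : ℝ) : ℂ) = (Real.pi : ℂ) := by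
    exact_mod_cast congrArg (Complex.ofReal) hπR
  set α : ℂ := ((alphaG g : ℝ) : ℂ) with hα
  set c : ℂ := ((Real.sqrt (Real.cos (alphaG g)) : ℝ) : ℂ) with hc
  set E : ℂ := Complex.exp (Complex.I * (1 - (k:ℂ)) * α) with hE
  set F : ℂ := Complex.exp (Complex.I * ((k:ℂ) - 1) * α) with hF
  have hexp1 : Complex.exp (Complex.I * (1 - ((4 * (g:ℤ) - k : ℤ):ℂ)) * α) = -F := by
    push_cast
    have : Complex.I * (1 - (4 * (g:ℂ) - k)) * α
        = Complex.I * ((k:ℂ) - 1) * α + (-(Real.pi * Complex.I)) := by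
      rw [← hπC]; ring
    rw [this, Complex.exp_add, Complex.exp_neg, Complex.exp_pi_mul_I, ← hF]
    rw [inv_neg, inv_one, mul_neg, mul_one]
  have hexp2 : Complex.exp (Complex.I * (((4 * (g:ℤ) - k : ℤ):ℂ) - 1) * α) = -E := by
    push_cast
    have : Complex.I * ((4 * (g:ℂ) - k) - 1) * α
        = Complex.I * (1 - (k:ℂ)) * α + Real.pi * Complex.I := by
      rw [← hπC]; ring
    rw [this, Complex.exp_add, Complex.exp_pi_mul_I, ← hE]
    rw [mul_neg, mul_one]
  have hsign : ((-1:ℂ)) ^ (4 * (g:ℤ) - k + 1) = (-1:ℂ) ^ (k + 1) := by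
    have h2 : ((-1:ℂ)) ^ (4 * (g:ℤ) - 2 * k) = 1 := by
      refine Even.neg_one_zpow ?_
      exact ⟨2 * (g:ℤ) - k, by ring⟩
    calc ((-1:ℂ)) ^ (4 * (g:ℤ) - k + 1)
        = ((-1:ℂ)) ^ (4 * (g:ℤ) - 2 * k) * ((-1:ℂ)) ^ (k + 1) := by
          rw [← zpow_add₀ (by norm_num : (-1:ℂ) ≠ 0)]; ring_nf
      _ = (-1:ℂ) ^ (k + 1) := by rw [h2, one_mul]
  simp only [Tgen, ← hα, ← hc, ← hE, ← hF, hexp1, hexp2, hsign]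
  have hLnum : E * (1 / z) + Complex.I * c = (E + Complex.I * c * z) / z := by
    field_simp
  have hLden : -Complex.I * c * (1 / z) + F = (-Complex.I * c + F * z) / z := by
    field_simp
  rw [hLnum, hLden, div_div_div_cancel_right₀ hz0]
  rw [one_div, mul_inv]
  have hinv : ((-1:ℂ) ^ (k + 1))⁻¹ = (-1:ℂ) ^ (k + 1) := by
    rcases Int.even_or_odd (k + 1) with h | h
    · rw [h.neg_one_zpow]; norm_num
    · rw [h.neg_one_zpow]; norm_num
  rw [hinv, ← one_div ((-F * z + Complex.I * c) / (-Complex.I * c * z + -E)), one_div_div]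
  congr 1
  rw [show (-Complex.I * c * z + -E) = -(E + Complex.I * c * z) by ring,
      show (-F * z + Complex.I * c) = -(-Complex.I * c + F * z) by ring,
      neg_div_neg_eq]
end

section
/- Let g ≥ 2, α = 2π/(8g−4), and let w = √(1−cos α) + i√(cos α). Then |w| = 1, and the two solutions z on the unit circle of |(−i√(cos α)/√(1−cos α)) z + e^{i(k−1)α}/√(1−cos α)| = 1 are z = −e^{i(k−1)α} w and z = e^{i(k−1)α} w̄; moreover their product equals e^{i(2k−4g)α}. -/
open Complex Real

set_option maxHeartbeats 2000000 in
theorem isometric_circle_endpoints (g : ℕ) (hg : 2 ≤ g) (k : ℤ) :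
    let α := alphaG g
    let w : ℂ := (Real.sqrt (1 - Real.cos α) : ℂ) + Complex.I * (Real.sqrt (Real.cos α) : ℂ)
    ‖w‖ = 1 ∧
    (∀ z : ℂ, ‖z‖ = 1 →
      (‖((-Complex.I * (Real.sqrt (Real.cos α) : ℂ) / (Real.sqrt (1 - Real.cos α) : ℂ)) * z
          + Complex.exp (Complex.I * ((k : ℂ) - 1) * (α : ℂ)) / (Real.sqrt (1 - Real.cos α) : ℂ))‖ = 1
        ↔ z = -Complex.exp (Complex.I * ((k : ℂ) - 1) * (α : ℂ)) * w
          ∨ z = Complex.exp (Complex.I * ((k : ℂ) - 1) * (α : ℂ)) * (starRingEnd ℂ) w)) ∧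
    (-Complex.exp (Complex.I * ((k : ℂ) - 1) * (α : ℂ)) * w)
        * (Complex.exp (Complex.I * ((k : ℂ) - 1) * (α : ℂ)) * (starRingEnd ℂ) w)
      = Complex.exp (Complex.I * ((2 * (k : ℂ) - 4 * (g : ℂ)) * (α : ℂ))) := by
  intro α w
  have hπ := Real.pi_pos
  have hg2 : (2 : ℝ) ≤ (g : ℝ) := by exact_mod_cast hg
  have hden : (12 : ℝ) ≤ 8 * (g : ℝ) - 4 := by linarith
  have hα0 : 0 < α := by
    unfold α; unfold alphaG; positivity
  have hα6 : α ≤ Real.pi / 6 := by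
    unfold α; unfold alphaG
    rw [div_le_div_iff₀ (by linarith) (by norm_num)]
    nlinarith
  have hα2 : α < Real.pi / 2 := by linarith
  have hc0 : 0 < Real.cos α := Real.cos_pos_of_mem_Ioo ⟨by linarith, hα2⟩
  have hc1 : Real.cos α < 1 := by
    rcases lt_or_eq_of_le (Real.cos_le_one α) with h | h
    · exact h
    · exfalso
      have := (Real.cos_eq_one_iff_of_lt_of_lt (by linarith) (by linarith)).1 h
      linarith
  set c := Real.cos α with hc
  set a := Real.sqrt (1 - c) with hadef
  set b := Real.sqrt c with hbdef
  have ha2 : a ^ 2 = 1 - c := Real.sq_sqrt (by linarith)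
  have hb2 : b ^ 2 = c := Real.sq_sqrt (by linarith)
  have ha0 : 0 < a := Real.sqrt_pos.2 (by linarith)
  have hb0 : 0 < b := Real.sqrt_pos.2 (by linarith)
  set e : ℂ := Complex.exp (Complex.I * ((k : ℂ) - 1) * (α : ℂ)) with hedef
  have hwre : w.re = a := by simp [w, hadef, hc]
  have hwim : w.im = b := by simp [w, hbdef, hc]
  have hnw : Complex.normSq w = 1 := by
    rw [Complex.normSq_apply, hwre, hwim]
    nlinarith
  have habsw : ‖w‖ = 1 := by
    rw [Complex.norm_def, hnw, Real.sqrt_one]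
  have habse : ‖e‖ = 1 := by
    rw [hedef, show Complex.I * ((k : ℂ) - 1) * (α : ℂ)
      = ((((k : ℝ) - 1) * α : ℝ) : ℂ) * Complex.I by push_cast; ring]
    exact Complex.norm_exp_ofReal_mul_I _
  have hee : e * (starRingEnd ℂ) e = 1 := by
    rw [Complex.mul_conj, ← Complex.sq_norm, habse]; norm_num
  clear_value c a b e
  refine ⟨habsw, ?_, ?_⟩
  · intro z hz
    set u : ℂ := z * (starRingEnd ℂ) e with hudef
    have hue : u * e = z := by
      rw [hudef]
      calc z * (starRingEnd ℂ) e * e = z * (e * (starRingEnd ℂ) e) := by ring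
        _ = z := by rw [hee, mul_one]
    have hnu : Complex.normSq u = 1 := by
      have : ‖u‖ = 1 := by
        rw [hudef, norm_mul, hz, Complex.norm_conj, habse, one_mul]
      rw [← Complex.sq_norm, this]; norm_num
    have hnu' : u.re ^ 2 + u.im ^ 2 = 1 := by
      rw [Complex.normSq_apply] at hnu; nlinarith
    clear_value u
    have hrewrite : (-Complex.I * (b : ℂ) / (a : ℂ)) * z + e / (a : ℂ)
        = e * (1 - Complex.I * (b : ℂ) * u) / (a : ℂ) := by
      rw [← hue]; ring
    have habs_a : ‖((a : ℝ) : ℂ)‖ = a := by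
      rw [Complex.norm_real, Real.norm_eq_abs, abs_of_pos ha0]
    have hstep : ‖((-Complex.I * (b : ℂ) / (a : ℂ)) * z + e / (a : ℂ))‖ = 1
        ↔ Complex.normSq (1 - Complex.I * (b : ℂ) * u) = 1 - c := by
      rw [hrewrite, norm_div, norm_mul, habse, one_mul, habs_a, div_eq_one_iff_eq ha0.ne']
      constructor
      · intro h
        have := congrArg (· ^ 2) h
        simpa [Complex.sq_norm, ha2] using this
      · intro h
        rw [Complex.norm_def, h, hadef]
    have hre : (1 - Complex.I * (b : ℂ) * u).re = 1 + b * u.im := by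
      simp only [Complex.sub_re, Complex.one_re, Complex.mul_re, Complex.mul_im, Complex.I_re,
        Complex.I_im, Complex.ofReal_re, Complex.ofReal_im]
      ring
    have him : (1 - Complex.I * (b : ℂ) * u).im = -(b * u.re) := by
      simp only [Complex.sub_im, Complex.one_im, Complex.mul_re, Complex.mul_im, Complex.I_re,
        Complex.I_im, Complex.ofReal_re, Complex.ofReal_im]
      ring
    have hquad : Complex.normSq (1 - Complex.I * (b : ℂ) * u) = 1 - c
        ↔ (u.im = -b ∧ (u.re = a ∨ u.re = -a)) := by
      rw [Complex.normSq_apply, hre, him]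
      constructor
      · intro h
        have him' : u.im = -b := by
          have hbim : b * u.im = -c := by nlinarith [hnu', hb2, h]
          have : b * u.im = b * (-b) := by rw [hbim]; nlinarith
          exact mul_left_cancel₀ hb0.ne' this
        have hre2 : u.re ^ 2 = a ^ 2 := by rw [ha2]; nlinarith
        exact ⟨him', sq_eq_sq_iff_eq_or_eq_neg.mp hre2 |>.imp id id⟩
      · rintro ⟨h1, h2 | h2⟩ <;> rw [h1, h2] <;> nlinarith
    rw [hstep, hquad]
    constructor
    · rintro ⟨h1, h2 | h2⟩
      · right
        rw [← hue]
        have : u = (starRingEnd ℂ) w := by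
          apply Complex.ext <;> simp [hwre, hwim, h1, h2]
        rw [this]; ring
      · left
        rw [← hue]
        have : u = -w := by
          apply Complex.ext <;> simp [hwre, hwim, h1, h2]
        rw [this]; ring
    · rintro (h | h)
      · have hu : u = -w := by
          rw [hudef, h]
          have : -e * w * (starRingEnd ℂ) e = -w * (e * (starRingEnd ℂ) e) := by ring
          rw [this, hee]; ring
        rw [hu]
        constructor
        · simp [hwim]
        · right; simp [hwre]
      · have hu : u = (starRingEnd ℂ) w := by
          rw [hudef, h]
          have : e * (starRingEnd ℂ) w * (starRingEnd ℂ) e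
              = (starRingEnd ℂ) w * (e * (starRingEnd ℂ) e) := by ring
          rw [this, hee]; ring
        rw [hu]
        constructor
        · simp [hwim]
        · left; simp [hwre]
  · have hwconj : w * (starRingEnd ℂ) w = 1 := by
      rw [Complex.mul_conj, hnw]; norm_num
    have hprod : (-e * w) * (e * (starRingEnd ℂ) w) = -(e * e) := by
      have : (-e * w) * (e * (starRingEnd ℂ) w) = -(e * e) * (w * (starRingEnd ℂ) w) := by ring
      rw [this, hwconj, mul_one]
    rw [hprod]
    have hpi : (4 * (g : ℝ) - 2) * α = Real.pi := by
      have h8 : (8 * (g : ℝ) - 4) ≠ 0 := by linarith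
      show (4 * (g : ℝ) - 2) * (2 * Real.pi / (8 * (g : ℝ) - 4)) = Real.pi
      rw [← mul_div_assoc, div_eq_iff h8]
      ring
    have hpiC : ((4 * (g : ℝ) - 2) : ℂ) * (α : ℂ) = (Real.pi : ℂ) := by
      exact_mod_cast congrArg Complex.ofReal hpi
    have hexp : Complex.I * ((k : ℂ) - 1) * (α : ℂ) + Complex.I * ((k : ℂ) - 1) * (α : ℂ)
        = Complex.I * ((2 * (k : ℂ) - 4 * (g : ℂ)) * (α : ℂ)) + (Real.pi : ℂ) * Complex.I
          + (2 * (Real.pi : ℂ)) * Complex.I - 2 * ((Real.pi : ℂ) * Complex.I) := by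
      push_cast at hpiC ⊢
      linear_combination Complex.I * hpiC
    rw [hedef, ← Complex.exp_add, hexp]
    rw [show Complex.I * ((2 * (k : ℂ) - 4 * (g : ℂ)) * (α : ℂ)) + (Real.pi : ℂ) * Complex.I
          + (2 * (Real.pi : ℂ)) * Complex.I - 2 * ((Real.pi : ℂ) * Complex.I)
        = Complex.I * ((2 * (k : ℂ) - 4 * (g : ℂ)) * (α : ℂ)) + (Real.pi : ℂ) * Complex.I by ring]
    rw [Complex.exp_add, Complex.exp_pi_mul_I]
    ring
end

section
/- Let g ≥ 2, n = 16g−8, and let M be an n×n matrix with entries in {0,1} such that: for every odd row index i, the row sum over odd-index columns equals 1 and the row sum over even-index columns equals 1; and for every even row index i, the row sum over odd-index columns equals 8g−8 and the row sum over even-index columns equals 8g−7. Then the vector v with v_i = λ − 8g + 7 for odd i and v_i = 8g−8 for even i, where λ = 4g−3 + √((4g−3)²−1), satisfies M·v = λ·v. -/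
open Finset

theorem eigenvector_of_rowsum_matrix (g : ℕ) (hg : 2 ≤ g)
    (M : Matrix (Fin (16 * g - 8)) (Fin (16 * g - 8)) ℝ)
    (h01 : ∀ i j, M i j = 0 ∨ M i j = 1)
    (hodd : ∀ i : Fin (16 * g - 8), Odd ((i : ℕ) + 1) →
      (∑ j ∈ univ.filter (fun j : Fin (16 * g - 8) => Odd ((j : ℕ) + 1)), M i j) = 1 ∧
      (∑ j ∈ univ.filter (fun j : Fin (16 * g - 8) => Even ((j : ℕ) + 1)), M i j) = 1)
    (heven : ∀ i : Fin (16 * g - 8), Even ((i : ℕ) + 1) →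
      (∑ j ∈ univ.filter (fun j : Fin (16 * g - 8) => Odd ((j : ℕ) + 1)), M i j) = 8 * (g : ℝ) - 8 ∧
      (∑ j ∈ univ.filter (fun j : Fin (16 * g - 8) => Even ((j : ℕ) + 1)), M i j) = 8 * (g : ℝ) - 7) :
    M.mulVec (fun i : Fin (16 * g - 8) => if Odd ((i : ℕ) + 1)
        then (4 * (g : ℝ) - 3 + Real.sqrt ((4 * (g : ℝ) - 3) ^ 2 - 1)) - 8 * (g : ℝ) + 7
        else 8 * (g : ℝ) - 8)
      = (4 * (g : ℝ) - 3 + Real.sqrt ((4 * (g : ℝ) - 3) ^ 2 - 1)) •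
        (fun i : Fin (16 * g - 8) => if Odd ((i : ℕ) + 1)
        then (4 * (g : ℝ) - 3 + Real.sqrt ((4 * (g : ℝ) - 3) ^ 2 - 1)) - 8 * (g : ℝ) + 7
        else 8 * (g : ℝ) - 8) := by
  have hg2 : (2:ℝ) ≤ (g:ℝ) := by exact_mod_cast hg
  set s := Real.sqrt ((4 * (g : ℝ) - 3) ^ 2 - 1) with hsdef
  have hs2 : s ^ 2 = (4 * (g:ℝ) - 3) ^ 2 - 1 := Real.sq_sqrt (by nlinarith)
  funext i
  simp only [Matrix.mulVec, dotProduct, Pi.smul_apply, smul_eq_mul]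
  have hsplit : (∑ j, M i j * (if Odd ((j : ℕ) + 1)
        then (4 * (g : ℝ) - 3 + s) - 8 * (g : ℝ) + 7 else 8 * (g : ℝ) - 8)) =
      (∑ j ∈ univ.filter (fun j : Fin (16 * g - 8) => Odd ((j : ℕ) + 1)), M i j) *
        ((4 * (g : ℝ) - 3 + s) - 8 * (g : ℝ) + 7) +
      (∑ j ∈ univ.filter (fun j : Fin (16 * g - 8) => Even ((j : ℕ) + 1)), M i j) *
        (8 * (g : ℝ) - 8) := by
    rw [Finset.sum_mul, Finset.sum_mul,
      ← Finset.sum_filter_add_sum_filter_not univ (fun j : Fin (16 * g - 8) => Odd ((j : ℕ) + 1))]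
    congr 1
    · exact Finset.sum_congr rfl fun j hj => by
        rw [if_pos (Finset.mem_filter.mp hj).2]
    · refine Finset.sum_congr ?_ fun j hj => ?_
      · exact Finset.filter_congr fun j _ => by simp [Nat.not_odd_iff_even]
      · rw [if_neg (by simpa [Nat.not_odd_iff_even] using (Finset.mem_filter.mp hj).2)]
  rw [hsplit]
  by_cases hi : Odd ((i : ℕ) + 1)
  · obtain ⟨h1, h2⟩ := hodd i hi
    rw [h1, h2, if_pos hi]
    nlinarith [hs2]
  · obtain ⟨h1, h2⟩ := heven i (Nat.not_odd_iff_even.mp hi)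
    rw [h1, h2, if_neg hi]
    ring
end

section
/- Let g ≥ 2, α = 2π/(8g−4), and T_k(z) = (−1)^{k+1} (e^{i(1−k)α} z + i√(cos α)) / ((−i√(cos α)) z + e^{i(k−1)α}). Then T_{σ(k)} ∘ T_k is the identity on the unit circle, where σ(k) = 4g−k mod (8g−4) for odd k and σ(k) = 2−k mod (8g−4) for even k. -/
open Complex Real

def sigmaSide (g k : ℤ) : ℤ :=
  if Odd k then (4 * g - k) % (8 * g - 4) else (2 - k) % (8 * g - 4)

lemma Tgen_period (g : ℕ) (hg : 2 ≤ g) (k m : ℤ) :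
    Tgen g (k + (8 * (g : ℤ) - 4) * m) = Tgen g k := by
  have hgR : (2:ℝ) ≤ (g:ℝ) := by exact_mod_cast hg
  have hden : (8*(g:ℝ)-4) ≠ 0 := by nlinarith
  have h2π : (8*(g:ℝ)-4) * alphaG g = 2*Real.pi := by
    unfold alphaG; field_simp
  have hnα : (8*(g:ℂ)-4) * (alphaG g : ℂ) = 2*(Real.pi:ℂ) := by
    have := congrArg Complex.ofReal h2π
    push_cast at this
    exact this
  funext z
  unfold Tgen
  have heven : Even ((8*(g:ℤ)-4) * m) := by
    refine Even.mul_right ⟨4*(g:ℤ) - 2, by ring⟩ m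
  have hsign : (-1:ℂ)^(k + (8*(g:ℤ)-4)*m + 1) = (-1:ℂ)^(k+1) := by
    rw [show k + (8*(g:ℤ)-4)*m + 1 = (k+1) + (8*(g:ℤ)-4)*m by ring,
      zpow_add₀ (by norm_num : (-1:ℂ) ≠ 0), Even.neg_one_zpow heven, mul_one]
  have he1 : Complex.exp (Complex.I * (1 - ((k + (8*(g:ℤ)-4)*m : ℤ):ℂ)) * (alphaG g : ℂ))
      = Complex.exp (Complex.I * (1 - (k:ℂ)) * (alphaG g : ℂ)) := by
    rw [show Complex.I * (1 - ((k + (8*(g:ℤ)-4)*m : ℤ):ℂ)) * (alphaG g : ℂ)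
        = Complex.I * (1 - (k:ℂ)) * (alphaG g : ℂ)
          + ((-m : ℤ):ℂ) * ((8*(g:ℂ)-4) * (alphaG g : ℂ)) * Complex.I by push_cast; ring,
      hnα, Complex.exp_add,
      show ((-m : ℤ):ℂ) * (2*(Real.pi:ℂ)) * Complex.I = ((-m:ℤ):ℂ) * (2*(Real.pi:ℂ) * Complex.I) by ring,
      Complex.exp_int_mul_two_pi_mul_I, mul_one]
  have he2 : Complex.exp (Complex.I * (((k + (8*(g:ℤ)-4)*m : ℤ):ℂ) - 1) * (alphaG g : ℂ))
      = Complex.exp (Complex.I * ((k:ℂ) - 1) * (alphaG g : ℂ)) := by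
    rw [show Complex.I * (((k + (8*(g:ℤ)-4)*m : ℤ):ℂ) - 1) * (alphaG g : ℂ)
        = Complex.I * ((k:ℂ) - 1) * (alphaG g : ℂ)
          + ((m : ℤ):ℂ) * ((8*(g:ℂ)-4) * (alphaG g : ℂ)) * Complex.I by push_cast; ring,
      hnα, Complex.exp_add,
      show ((m : ℤ):ℂ) * (2*(Real.pi:ℂ)) * Complex.I = ((m:ℤ):ℂ) * (2*(Real.pi:ℂ) * Complex.I) by ring,
      Complex.exp_int_mul_two_pi_mul_I, mul_one]
  rw [hsign, he1, he2]

theorem Tgen_sigma_inverse (g : ℕ) (hg : 2 ≤ g) (k : ℤ) (z : ℂ) (hz : ‖z‖ = 1) :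
    Tgen g (sigmaSide (g : ℤ) k) (Tgen g k z) = z := by
  have hgR : (2:ℝ) ≤ (g:ℝ) := by exact_mod_cast hg
  have hdenpos : (0:ℝ) < 8*(g:ℝ)-4 := by nlinarith
  have hαpos : 0 < alphaG g := by
    unfold alphaG
    positivity
  have hαle : alphaG g ≤ Real.pi/2 := by
    unfold alphaG
    rw [div_le_iff₀ hdenpos]
    nlinarith [Real.pi_pos]
  have hcos0 : 0 ≤ Real.cos (alphaG g) := Real.cos_nonneg_of_mem_Icc ⟨by linarith, hαle⟩
  have hcos1 : Real.cos (alphaG g) < 1 := by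
    have := Real.cos_lt_cos_of_nonneg_of_le_pi (le_refl 0) (by linarith [Real.pi_pos]) hαpos
    simpa using this
  set α := alphaG g with hα
  set s : ℝ := Real.sqrt (Real.cos α) with hs
  have hs0 : 0 ≤ s := Real.sqrt_nonneg _
  have hs2 : (s:ℂ) * s = (Real.cos α : ℂ) := by
    rw [← Complex.ofReal_mul, Real.mul_self_sqrt hcos0]
  have hs1 : s < 1 := by
    rw [hs, show (1:ℝ) = Real.sqrt 1 by simp]
    exact Real.sqrt_lt_sqrt hcos0 hcos1
  set c : ℂ := (Real.cos α : ℂ) with hc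
  have hc1 : c - 1 ≠ 0 := by
    have : c ≠ 1 := by
      rw [hc]
      exact_mod_cast ne_of_lt hcos1
    exact sub_ne_zero.mpr this
  have hπC : (4*(g:ℂ)-2) * (α:ℂ) = (Real.pi:ℂ) := by
    have h : (4*(g:ℝ)-2) * α = Real.pi := by
      rw [hα]; unfold alphaG; rw [mul_div_assoc', div_eq_iff hdenpos.ne']; ring
    have := congrArg Complex.ofReal h
    push_cast at this
    exact this
  -- abs of the exponentials
  have habs : ∀ j : ℤ, ‖Complex.exp (Complex.I * ((j:ℂ) - 1) * (α:ℂ))‖ = 1 := by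
    intro j
    rw [show Complex.I * ((j:ℂ)-1) * (α:ℂ) = ((((j:ℝ)-1)*α : ℝ):ℂ) * Complex.I by push_cast; ring]
    exact Complex.norm_exp_ofReal_mul_I _
  set A : ℂ := Complex.exp (Complex.I * (1 - (k:ℂ)) * (α:ℂ)) with hA
  set B : ℂ := Complex.exp (Complex.I * ((k:ℂ) - 1) * (α:ℂ)) with hB
  have hAB : A * B = 1 := by
    rw [hA, hB, ← Complex.exp_add,
      show Complex.I * (1 - (k:ℂ)) * (α:ℂ) + Complex.I * ((k:ℂ) - 1) * (α:ℂ) = 0 by ring,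
      Complex.exp_zero]
  set D : ℂ := -Complex.I * (s:ℂ) * z + B with hD
  have hDne : D ≠ 0 := by
    intro h
    have hBval : B = Complex.I * (s:ℂ) * z := by
      rw [hD] at h; linear_combination h
    have h1 : ‖B‖ = s := by
      rw [hBval]
      rw [norm_mul, norm_mul, Complex.norm_I, Complex.norm_real, hz,
        Real.norm_of_nonneg hs0, one_mul, mul_one]
    have h2 : ‖B‖ = 1 := habs k
    rw [h1] at h2
    linarith
  have hper : ∀ a : ℤ, Tgen g (a % (8*(g:ℤ)-4)) = Tgen g a := by
    intro a
    have h : a % (8*(g:ℤ)-4) = a + (8*(g:ℤ)-4) * (-(a / (8*(g:ℤ)-4))) := by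
      rw [Int.emod_def]; ring
    rw [h, Tgen_period g hg]
  by_cases hk : Odd k
  · -- odd case: representative 4g - k
    obtain ⟨m, hm⟩ := hk
    rw [show sigmaSide (g:ℤ) k = (4*(g:ℤ) - k) % (8*(g:ℤ)-4) by
        unfold sigmaSide; rw [if_pos ⟨m, hm⟩], hper]
    have hsign1 : (-1:ℂ)^(k+1) = 1 := Even.neg_one_zpow ⟨m+1, by omega⟩
    have hsign2 : (-1:ℂ)^((4*(g:ℤ)-k)+1) = 1 := Even.neg_one_zpow ⟨2*(g:ℤ)-m, by omega⟩
    have hE1 : Complex.exp (Complex.I * (1 - ((4*(g:ℤ)-k : ℤ):ℂ)) * (α:ℂ)) = -B := by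
      rw [show Complex.I * (1 - ((4*(g:ℤ)-k : ℤ):ℂ)) * (α:ℂ)
          = Complex.I * ((k:ℂ) - 1) * (α:ℂ) - (4*(g:ℂ)-2) * (α:ℂ) * Complex.I by push_cast; ring,
        hπC, Complex.exp_sub, Complex.exp_pi_mul_I, hB]
      field_simp
    have hE2 : Complex.exp (Complex.I * (((4*(g:ℤ)-k : ℤ):ℂ) - 1) * (α:ℂ)) = -A := by
      rw [show Complex.I * (((4*(g:ℤ)-k : ℤ):ℂ) - 1) * (α:ℂ)
          = Complex.I * (1 - (k:ℂ)) * (α:ℂ) + (4*(g:ℂ)-2) * (α:ℂ) * Complex.I by push_cast; ring,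
        hπC, Complex.exp_add, Complex.exp_pi_mul_I, hA]
      ring
    show Tgen g (4*(g:ℤ)-k) (Tgen g k z) = z
    unfold Tgen
    rw [← hα, ← hs, ← hA, ← hB]
    push_cast
    rw [hsign1]
    rw [show ((4:ℂ)*(g:ℂ) - (k:ℂ)) = ((4*(g:ℤ)-k : ℤ):ℂ) by push_cast; ring] at *
    rw [hE1, hE2, hsign2, one_mul, one_mul]
    have hnum : -B * ((A*z + Complex.I*(s:ℂ))/D) + Complex.I*(s:ℂ) = ((c-1)*z)/D := by
      field_simp
      linear_combination z * hs2 - z * hAB - z * (s:ℂ) * (s:ℂ) * Complex.I_sq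
    have hden2 : -Complex.I*(s:ℂ) * ((A*z + Complex.I*(s:ℂ))/D) + -A = (c-1)/D := by
      field_simp
      linear_combination hs2 - hAB - (s:ℂ) * (s:ℂ) * Complex.I_sq
    rw [hD] at hnum hden2
    rw [hnum, hden2, div_div_div_cancel_right₀ hDne]
    exact mul_div_cancel_left₀ z hc1
  · -- even case: representative 2 - k
    rw [Int.not_odd_iff_even] at hk
    obtain ⟨m, hm⟩ := hk
    rw [show sigmaSide (g:ℤ) k = (2 - k) % (8*(g:ℤ)-4) by
        unfold sigmaSide; rw [if_neg (by rw [Int.not_odd_iff_even]; exact ⟨m, hm⟩)], hper]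
    have hsign1 : (-1:ℂ)^(k+1) = -1 := Odd.neg_one_zpow ⟨m, by omega⟩
    have hsign2 : (-1:ℂ)^((2-k)+1) = -1 := Odd.neg_one_zpow ⟨1-m, by omega⟩
    have hE1 : Complex.exp (Complex.I * (1 - ((2-k : ℤ):ℂ)) * (α:ℂ)) = B := by
      rw [show Complex.I * (1 - ((2-k : ℤ):ℂ)) * (α:ℂ)
          = Complex.I * ((k:ℂ) - 1) * (α:ℂ) by push_cast; ring, hB]
    have hE2 : Complex.exp (Complex.I * (((2-k : ℤ):ℂ) - 1) * (α:ℂ)) = A := by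
      rw [show Complex.I * (((2-k : ℤ):ℂ) - 1) * (α:ℂ)
          = Complex.I * (1 - (k:ℂ)) * (α:ℂ) by push_cast; ring, hA]
    show Tgen g (2-k) (Tgen g k z) = z
    unfold Tgen
    rw [← hα, ← hs, ← hA, ← hB]
    push_cast
    rw [hsign1]
    rw [show ((2:ℂ) - (k:ℂ)) = ((2-k : ℤ):ℂ) by push_cast; ring] at *
    rw [hE1, hE2, hsign2]
    have hnum : B * (-1 * ((A*z + Complex.I*(s:ℂ))/D)) + Complex.I*(s:ℂ) = ((c-1)*z)/D := by
      field_simp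
      linear_combination z * hs2 - z * hAB - z * (s:ℂ) * (s:ℂ) * Complex.I_sq
    have hden2 : -Complex.I*(s:ℂ) * (-1 * ((A*z + Complex.I*(s:ℂ))/D)) + A = (1-c)/D := by
      field_simp
      linear_combination hAB - hs2 + (s:ℂ) * (s:ℂ) * Complex.I_sq
    have h1c : (1:ℂ) - c ≠ 0 := fun h => hc1 (by linear_combination -h)
    rw [hD] at hnum hden2
    rw [hnum, hden2, div_div_div_cancel_right₀ hDne]
    rw [neg_one_mul, ← neg_div, div_eq_iff h1c]
    ring
end
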